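/- Let p be a prime and let ξ = (ξ₁, ξ₂, ξ₃) ∈ (ℤ/pℤ)³ satisfy ξ₁²+ξ₂²+ξ₃² = 3ξ₁ξ₂ξ₃ with ξ ≠ (0,0,0). Let F be the field with p² elements containing ℤ/pℤ, and for j = 1,2,3 let λ_j ∈ Fˣ satisfy λ_j + λ_j⁻¹ = 3ξ_j (such λ_j always exist). Then max(ord(λ₁), ord(λ₂), ord(λ₃)) ≥ (log p / log 20)^{1/3}, where ord denotes the multiplicative order in Fˣ. -/

import Mathlib

open Polynomial

private lemma markoff_real_bound (a b c : ℝ) (ha : |a| ≤ 2) (hb : |b| ≤ 2) (hc : |c| ≤ 2) :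
    |a^2+b^2+c^2 - a*b*c| ≤ 20 := by
  rw [abs_le] at *
  obtain ⟨ha1, ha2⟩ := ha; obtain ⟨hb1, hb2⟩ := hb; obtain ⟨hc1, hc2⟩ := hc
  constructor <;> nlinarith [mul_nonneg (by linarith : (0:ℝ) ≤ 2-a) (sq_nonneg (b+c)),
    mul_nonneg (by linarith : (0:ℝ) ≤ 2+a) (sq_nonneg (b-c)),
    mul_nonneg (by linarith : (0:ℝ) ≤ 2-a) (sq_nonneg (b-c)),
    mul_nonneg (by linarith : (0:ℝ) ≤ 2+a) (sq_nonneg (b+c)),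
    mul_nonneg (mul_nonneg (by linarith : (0:ℝ) ≤ 2-a) (by linarith : (0:ℝ) ≤ 2-b)) (by linarith : (0:ℝ) ≤ 2-c),
    mul_nonneg (mul_nonneg (by linarith : (0:ℝ) ≤ 2+a) (by linarith : (0:ℝ) ≤ 2+b)) (by linarith : (0:ℝ) ≤ 2+c)]

private lemma markoff_real_zero (a b c : ℝ) (ha : |a| ≤ 2)
    (h : a^2+b^2+c^2 - a*b*c = 0) : a = 0 ∧ b = 0 ∧ c = 0 := by
  rw [abs_le] at *
  have h1 : a = 0 := by
    nlinarith [mul_nonneg (by linarith [ha.1, ha.2] : (0:ℝ) ≤ 2-a) (sq_nonneg (b+c)),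
      mul_nonneg (by linarith [ha.1] : (0:ℝ) ≤ 2+a) (sq_nonneg (b-c)), sq_nonneg a, sq_nonneg b,
      sq_nonneg c]
  subst h1
  refine ⟨rfl, ?_, ?_⟩
  · nlinarith [sq_nonneg b, sq_nonneg c]
  · nlinarith [sq_nonneg b, sq_nonneg c]

set_option maxHeartbeats 2000000 in
theorem markoff_rotation_order_lower_bound (p : ℕ) [hp : Fact p.Prime]
    (ξ₁ ξ₂ ξ₃ : ZMod p)
    (hsurf : ξ₁ ^ 2 + ξ₂ ^ 2 + ξ₃ ^ 2 = 3 * ξ₁ * ξ₂ * ξ₃)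
    (hne : (ξ₁, ξ₂, ξ₃) ≠ (0, 0, 0))
    (F : Type) [Field F] [Algebra (ZMod p) F] (hcard : Nat.card F = p ^ 2)
    (lam₁ lam₂ lam₃ : F) (hlam₁0 : lam₁ ≠ 0) (hlam₂0 : lam₂ ≠ 0) (hlam₃0 : lam₃ ≠ 0)
    (hlam₁ : lam₁ + lam₁⁻¹ = algebraMap (ZMod p) F (3 * ξ₁))
    (hlam₂ : lam₂ + lam₂⁻¹ = algebraMap (ZMod p) F (3 * ξ₂))
    (hlam₃ : lam₃ + lam₃⁻¹ = algebraMap (ZMod p) F (3 * ξ₃)) :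
    (Real.log p / Real.log 20) ^ ((1 : ℝ) / 3) ≤
      (max (max (orderOf lam₁) (orderOf lam₂)) (orderOf lam₃) : ℝ) := by
  have hF : Finite F := by
    refine (Nat.card_ne_zero.mp ?_).2
    rw [hcard]
    exact pow_ne_zero 2 hp.out.pos.ne'
  -- units
  set u₁ : Fˣ := Units.mk0 lam₁ hlam₁0 with hu₁
  set u₂ : Fˣ := Units.mk0 lam₂ hlam₂0 with hu₂
  set u₃ : Fˣ := Units.mk0 lam₃ hlam₃0 with hu₃
  have hord₁ : orderOf lam₁ = orderOf u₁ := orderOf_units (y := u₁)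
  have hord₂ : orderOf lam₂ = orderOf u₂ := orderOf_units (y := u₂)
  have hord₃ : orderOf lam₃ = orderOf u₃ := orderOf_units (y := u₃)
  set D : ℕ := max (max (orderOf lam₁) (orderOf lam₂)) (orderOf lam₃) with hD
  have hd₁pos : 0 < orderOf u₁ := orderOf_pos u₁
  have hDpos : (1:ℕ) ≤ D := le_trans hd₁pos (by rw [hD, hord₁]; exact le_max_of_le_left (le_max_left _ _))
  have hlog20 : 0 < Real.log 20 := Real.log_pos (by norm_num)
  -- trivial case p ≤ 20
  by_cases hple : (p:ℝ) ≤ 20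
  · have h1 : (Real.log p / Real.log 20) ^ ((1 : ℝ) / 3) ≤ 1 := by
      apply Real.rpow_le_one _ _ (by norm_num)
      · apply div_nonneg _ hlog20.le
        apply Real.log_natCast_nonneg
      · rw [div_le_one hlog20]
        apply Real.log_le_log (by exact_mod_cast hp.out.pos) hple
    refine le_trans h1 ?_
    exact_mod_cast hDpos
  push_neg at hple
  have hp20 : 20 < p := by exact_mod_cast hple
  -- the subgroup generated by the three units
  have hcyc : IsCyclic Fˣ := inferInstance
  set H : Subgroup Fˣ := Subgroup.closure {u₁, u₂, u₃} with hH
  obtain ⟨gH, hgen⟩ := IsCyclic.exists_generator (α := H)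
  set g : Fˣ := (gH : Fˣ) with hg
  set m : ℕ := orderOf g with hm
  have hmpos : 0 < m := orderOf_pos g
  -- membership exponents
  have hmem : ∀ v : Fˣ, v ∈ H → ∃ e : ℕ, g ^ e = v := by
    intro v hv
    have h1 : (⟨v, hv⟩ : H) ∈ Subgroup.zpowers gH := hgen _
    have h2 : (⟨v, hv⟩ : H) ∈ Submonoid.powers gH := by
      rwa [mem_powers_iff_mem_zpowers]
    obtain ⟨e, he⟩ := h2
    exact ⟨e, by
      have := congrArg (Subtype.val) he
      simpa using this⟩
  have hu₁H : u₁ ∈ H := Subgroup.subset_closure (by simp)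
  have hu₂H : u₂ ∈ H := Subgroup.subset_closure (by simp)
  have hu₃H : u₃ ∈ H := Subgroup.subset_closure (by simp)
  obtain ⟨e₁, he₁⟩ := hmem u₁ hu₁H
  obtain ⟨e₂, he₂⟩ := hmem u₂ hu₂H
  obtain ⟨e₃, he₃⟩ := hmem u₃ hu₃H
  obtain ⟨f₁, hf₁⟩ := hmem u₁⁻¹ (H.inv_mem hu₁H)
  obtain ⟨f₂, hf₂⟩ := hmem u₂⁻¹ (H.inv_mem hu₂H)
  obtain ⟨f₃, hf₃⟩ := hmem u₃⁻¹ (H.inv_mem hu₃H)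
  have hef₁ : m ∣ e₁ + f₁ := by
    rw [hm, orderOf_dvd_iff_pow_eq_one, pow_add, he₁, hf₁, mul_inv_cancel]
  have hef₂ : m ∣ e₂ + f₂ := by
    rw [hm, orderOf_dvd_iff_pow_eq_one, pow_add, he₂, hf₂, mul_inv_cancel]
  have hef₃ : m ∣ e₃ + f₃ := by
    rw [hm, orderOf_dvd_iff_pow_eq_one, pow_add, he₃, hf₃, mul_inv_cancel]
  -- m divides the product of the orders
  have hmdvd : m ∣ orderOf u₁ * (orderOf u₂ * orderOf u₃) := by
    set L : ℕ := Nat.lcm (orderOf u₁) (Nat.lcm (orderOf u₂) (orderOf u₃)) with hL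
    have hLdvd : L ∣ orderOf u₁ * (orderOf u₂ * orderOf u₃) := by
      apply Nat.lcm_dvd (Dvd.dvd.mul_right (dvd_refl _) _)
      apply dvd_mul_of_dvd_right
      exact Nat.lcm_dvd (Dvd.dvd.mul_right (dvd_refl _) _) (dvd_mul_left _ _)
    refine dvd_trans ?_ hLdvd
    have hker : H ≤ (powMonoidHom L : Fˣ →* Fˣ).ker := by
      rw [hH, Subgroup.closure_le]
      intro v hv
      simp only [Set.mem_insert_iff, Set.mem_singleton_iff] at hv
      have : v ^ L = 1 := by
        rcases hv with rfl | rfl | rfl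
        · rw [← orderOf_dvd_iff_pow_eq_one]; exact Nat.dvd_lcm_left _ _
        · rw [← orderOf_dvd_iff_pow_eq_one]
          exact dvd_trans (Nat.dvd_lcm_left _ _) (Nat.dvd_lcm_right _ _)
        · rw [← orderOf_dvd_iff_pow_eq_one]
          exact dvd_trans (Nat.dvd_lcm_right _ _) (Nat.dvd_lcm_right _ _)
      simpa [MonoidHom.mem_ker, powMonoidHom_apply] using this
    have hgL : g ^ L = 1 := by
      have h2 := hker gH.2
      rw [MonoidHom.mem_ker, powMonoidHom_apply] at h2
      exact h2
    rw [hm]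
    exact orderOf_dvd_of_pow_eq_one hgL
  have hmD : m ≤ D ^ 3 := by
    have h1 : m ≤ orderOf u₁ * (orderOf u₂ * orderOf u₃) := by
      apply Nat.le_of_dvd _ hmdvd
      exact Nat.mul_pos (orderOf_pos u₁) (Nat.mul_pos (orderOf_pos u₂) (orderOf_pos u₃))
    refine le_trans h1 ?_
    have hb₁ : orderOf u₁ ≤ D := by rw [hD, ← hord₁]; exact le_max_of_le_left (le_max_left _ _)
    have hb₂ : orderOf u₂ ≤ D := by rw [hD, ← hord₂]; exact le_max_of_le_left (le_max_right _ _)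
    have hb₃ : orderOf u₃ ≤ D := by rw [hD, ← hord₃]; exact le_max_right _ _
    calc orderOf u₁ * (orderOf u₂ * orderOf u₃) ≤ D * (D * D) :=
          Nat.mul_le_mul hb₁ (Nat.mul_le_mul hb₂ hb₃)
      _ = D ^ 3 := by ring
  -- primitive root in F
  have hgF : orderOf ((g : F)) = m := by rw [hm]; exact orderOf_units (y := g)
  have hgprim : IsPrimitiveRoot ((g : F)) m := by
    have := IsPrimitiveRoot.orderOf ((g : F))
    rwa [hgF] at this
  set mp : ℕ+ := ⟨m, hmpos⟩ with hmp
  -- cyclotomic field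
  set K := CyclotomicField mp ℚ with hK
  haveI : IsCyclotomicExtension {(mp : ℕ)} ℚ K := by
    haveI : NeZero ((mp : ℕ) : ℚ) := ⟨by exact_mod_cast mp.ne_zero⟩
    exact CyclotomicField.isCyclotomicExtension _ _
  set ζ := IsCyclotomicExtension.zeta mp ℚ K with hζdef
  have hζ : IsPrimitiveRoot ζ m := IsCyclotomicExtension.zeta_spec mp ℚ K
  haveI hfd : FiniteDimensional ℚ K :=
    IsCyclotomicExtension.finiteDimensional (S := {(mp : ℕ)}) (K := ℚ) K
  haveI hgal : IsGalois ℚ K := IsCyclotomicExtension.isGalois {(mp : ℕ)} ℚ K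
  have hζint : IsIntegral ℤ ζ := hζ.isIntegral hmpos
  -- the element E
  set z₁ : K := ζ ^ e₁ + ζ ^ f₁ with hz₁
  set z₂ : K := ζ ^ e₂ + ζ ^ f₂ with hz₂
  set z₃ : K := ζ ^ e₃ + ζ ^ f₃ with hz₃
  set E : K := z₁^2 + z₂^2 + z₃^2 - z₁ * z₂ * z₃ with hE
  have hEint : IsIntegral ℤ E := by
    have h1 : IsIntegral ℤ z₁ := (hζint.pow e₁).add (hζint.pow f₁)
    have h2 : IsIntegral ℤ z₂ := (hζint.pow e₂).add (hζint.pow f₂)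
    have h3 : IsIntegral ℤ z₃ := (hζint.pow e₃).add (hζint.pow f₃)
    exact ((h1.pow 2).add ((h2.pow 2)) |>.add (h3.pow 2)).sub ((h1.mul h2).mul h3)
  set N : ℚ := Algebra.norm ℚ E with hN
  obtain ⟨nz, hnz⟩ : ∃ nz : ℤ, algebraMap ℤ ℚ nz = N := by
    rw [← IsIntegrallyClosed.isIntegral_iff]
    exact Algebra.isIntegral_norm ℚ hEint
  -- embeddings into ℂ: each factor is small and nonzero
  -- transfer: vanishing of a coordinate forces ξ = 0
  have h3ne : (3 : ZMod p) ≠ 0 := by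
    intro h3
    have : p ∣ 3 := by
      have := (ZMod.natCast_eq_zero_iff 3 p).mp (by exact_mod_cast h3)
      exact this
    have := Nat.le_of_dvd (by norm_num) this
    omega
  have transfer : ∀ (e : ℕ) (u : Fˣ) (lam : F) (ξ : ZMod p), g ^ e = u → (u : F) = lam →
      lam + lam⁻¹ = algebraMap (ZMod p) F (3 * ξ) → (¬ m ∣ 2 * e) → (m ∣ 4 * e) → ξ = 0 := by
    intro e u lam ξ hgu hul hlam hn2 h4
    have hlg : ((g:F)) ^ e = lam := by
      rw [← hul, ← hgu]
      exact (Units.val_pow_eq_pow_val g e).symm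
    have hx4 : (lam ^ 2) * (lam ^ 2) = 1 := by
      have : ((g:F)) ^ (4 * e) = 1 := by
        rw [← orderOf_dvd_iff_pow_eq_one, hgF]
        exact h4
      calc (lam^2) * (lam^2) = ((g:F) ^ e)^4 := by rw [hlg]; ring
        _ = ((g:F)) ^ (4*e) := by rw [← pow_mul, mul_comm]
        _ = 1 := this
    have hx2 : lam ^ 2 ≠ 1 := by
      intro h1
      apply hn2
      rw [← hgF, orderOf_dvd_iff_pow_eq_one]
      calc ((g:F)) ^ (2*e) = ((g:F) ^ e)^2 := by rw [← pow_mul, mul_comm]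
        _ = lam ^ 2 := by rw [hlg]
        _ = 1 := h1
    have hneg : lam ^ 2 = -1 := by
      rcases mul_self_eq_one_iff.mp hx4 with h | h
      · exact absurd h hx2
      · exact h
    have hinv : lam⁻¹ = -lam := by
      have h1 : lam * (-lam) = 1 := by linear_combination -hneg
      exact inv_eq_of_mul_eq_one_right h1
    have h0 : algebraMap (ZMod p) F (3 * ξ) = 0 := by
      rw [← hlam, hinv]
      ring
    have h00 : (3 : ZMod p) * ξ = 0 := by
      apply (algebraMap (ZMod p) F).injective
      rw [h0, map_zero]
    rcases mul_eq_zero.mp h00 with h | h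
    · exact absurd h h3ne
    · exact h
  have hfactor : ∀ σ : K →ₐ[ℚ] ℂ, ‖σ E‖ ≤ 20 ∧ σ E ≠ 0 := by
    intro σ
    have hσinj : Function.Injective σ := σ.toRingHom.injective
    set w : ℂ := σ ζ with hw
    have hwprim : IsPrimitiveRoot w m := hζ.map_of_injective hσinj
    have hwnorm : ‖w‖ = 1 := Complex.norm_eq_one_of_pow_eq_one hwprim.pow_eq_one hmpos.ne'
    have habs : ∀ k : ℕ, ‖w ^ k‖ = 1 := by
      intro k
      rw [norm_pow]
      rw [hwnorm, one_pow]
    have hinvconj : ∀ k : ℕ, (w ^ k)⁻¹ = (starRingEnd ℂ) (w ^ k) := by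
      intro k
      apply Complex.inv_eq_conj
      rw [habs]
    have hwf : ∀ e f : ℕ, m ∣ e + f → w ^ f = (starRingEnd ℂ) (w ^ e) := by
      intro e f hef
      rw [← hinvconj]
      have h1 : w ^ e * w ^ f = 1 := by
        rw [← pow_add]
        obtain ⟨k, hk⟩ := hef
        rw [hk, pow_mul, hwprim.pow_eq_one, one_pow]
      exact (inv_eq_of_mul_eq_one_right h1).symm
    have hzval : ∀ e f : ℕ, m ∣ e + f → (σ (ζ ^ e + ζ ^ f) : ℂ) = ((2 * (w ^ e).re : ℝ) : ℂ) := by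
      intro e f hef
      rw [map_add, map_pow, map_pow, ← hw, hwf e f hef, Complex.add_conj]
    set r₁ : ℝ := 2 * (w ^ e₁).re with hr₁
    set r₂ : ℝ := 2 * (w ^ e₂).re with hr₂
    set r₃ : ℝ := 2 * (w ^ e₃).re with hr₃
    have hrabs : ∀ k : ℕ, |2 * (w ^ k).re| ≤ 2 := by
      intro k
      rw [abs_mul]
      have := Complex.abs_re_le_norm (w ^ k)
      rw [habs k] at this
      calc |(2:ℝ)| * |(w ^ k).re| ≤ 2 * 1 := by
            apply mul_le_mul (by norm_num) this (abs_nonneg _) (by norm_num)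
        _ = 2 := by norm_num
    have hσE : σ E = ((r₁^2 + r₂^2 + r₃^2 - r₁ * r₂ * r₃ : ℝ) : ℂ) := by
      rw [hE, hz₁, hz₂, hz₃, hr₁, hr₂, hr₃]
      rw [map_sub, map_add, map_add, map_pow, map_pow, map_pow, map_mul, map_mul]
      rw [hzval e₁ f₁ hef₁, hzval e₂ f₂ hef₂, hzval e₃ f₃ hef₃]
      simp only [Complex.ofReal_mul, Complex.ofReal_ofNat, Complex.ofReal_sub,
        Complex.ofReal_add, Complex.ofReal_pow]
      try ring
    constructor
    · rw [hσE, Complex.norm_real, Real.norm_eq_abs]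
      exact markoff_real_bound r₁ r₂ r₃ (hrabs e₁) (hrabs e₂) (hrabs e₃)
    · intro h0
      rw [hσE] at h0
      have hreal : r₁^2 + r₂^2 + r₃^2 - r₁ * r₂ * r₃ = 0 := by exact_mod_cast h0
      obtain ⟨hr1, hr2, hr3⟩ := markoff_real_zero r₁ r₂ r₃ (hrabs e₁) hreal
      -- each rⱼ = 0 means w ^ (2 eⱼ) = -1, transfer to F
      have hwzero : ∀ e : ℕ, (2 * (w ^ e).re : ℝ) = 0 → (¬ m ∣ 2 * e) ∧ (m ∣ 4 * e) := by
        intro e hre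
        have hsum : w ^ e + (starRingEnd ℂ) (w ^ e) = 0 := by
          rw [Complex.add_conj]
          exact_mod_cast hre
        have hwe : w ^ e ≠ 0 := by
          intro hw0
          have := habs e
          rw [hw0] at this
          simp at this
        have hm1 : w ^ (2 * e) = -1 := by
          have hconj : (starRingEnd ℂ) (w ^ e) = (w ^ e)⁻¹ := (hinvconj e).symm
          rw [hconj] at hsum
          have : w ^ e * (w ^ e + (w ^ e)⁻¹) = 0 := by rw [hsum, mul_zero]
          rw [mul_add, mul_inv_cancel₀ hwe] at this
          have h2 : w ^ e * w ^ e = -1 := by linear_combination this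
          rw [two_mul, pow_add]
          exact h2
        constructor
        · intro hdvd2
          have : w ^ (2 * e) = 1 := by
            obtain ⟨k, hk⟩ := hdvd2
            rw [hk, pow_mul, hwprim.pow_eq_one, one_pow]
          rw [hm1] at this
          norm_num at this
        · apply hwprim.dvd_of_pow_eq_one
          have : w ^ (4 * e) = (w ^ (2 * e))^2 := by rw [← pow_mul]; ring_nf
          rw [this, hm1]
          norm_num
      have hξ₁ : ξ₁ = 0 := by
        obtain ⟨hn2, h4⟩ := hwzero e₁ (by rw [← hr₁]; exact hr1)
        exact transfer e₁ u₁ lam₁ ξ₁ he₁ (by rw [hu₁]; rfl) hlam₁ hn2 h4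
      have hξ₂ : ξ₂ = 0 := by
        obtain ⟨hn2, h4⟩ := hwzero e₂ (by rw [← hr₂]; exact hr2)
        exact transfer e₂ u₂ lam₂ ξ₂ he₂ (by rw [hu₂]; rfl) hlam₂ hn2 h4
      have hξ₃ : ξ₃ = 0 := by
        obtain ⟨hn2, h4⟩ := hwzero e₃ (by rw [← hr₃]; exact hr3)
        exact transfer e₃ u₃ lam₃ ξ₃ he₃ (by rw [hu₃]; rfl) hlam₃ hn2 h4
      exact hne (by rw [hξ₁, hξ₂, hξ₃])
  -- bound on the norm
  have hcardemb : Fintype.card (K →ₐ[ℚ] ℂ) ≤ m := by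
    rw [AlgHom.card ℚ K ℂ, IsCyclotomicExtension.finrank (n := mp) K
      (Polynomial.cyclotomic.irreducible_rat mp.pos)]
    exact Nat.totient_le m
  have hembed : algebraMap ℚ ℂ N = ∏ σ : K →ₐ[ℚ] ℂ, σ E :=
    Algebra.norm_eq_prod_embeddings ℚ ℂ E
  have hNne : N ≠ 0 := by
    intro h0
    rw [h0, map_zero] at hembed
    obtain ⟨σ, _, hσ⟩ := Finset.prod_eq_zero_iff.mp hembed.symm
    exact (hfactor σ).2 hσ
  have hNbound : |(N:ℝ)| ≤ 20 ^ m := by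
    have h1 : ‖algebraMap ℚ ℂ N‖ = |(N:ℝ)| := by
      rw [eq_ratCast (algebraMap ℚ ℂ) N]
      rw [show ((N : ℚ) : ℂ) = (((N:ℝ)) : ℂ) by push_cast; rfl]
      rw [Complex.norm_real, Real.norm_eq_abs]
    rw [← h1, hembed, norm_prod]
    calc (∏ σ : K →ₐ[ℚ] ℂ, ‖σ E‖)
        ≤ ∏ _σ : K →ₐ[ℚ] ℂ, (20:ℝ) :=
          Finset.prod_le_prod (fun σ _ => (norm_nonneg _)) (fun σ _ => (hfactor σ).1)
      _ = 20 ^ (Fintype.card (K →ₐ[ℚ] ℂ)) := by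
          rw [Finset.prod_const, Finset.card_univ]
      _ ≤ 20 ^ m := pow_le_pow_right₀ (by norm_num) hcardemb
  -- divisibility by p
  have hdvd : (p : ℤ) ∣ nz := by
    haveI : NeZero m := ⟨hmpos.ne'⟩
    set S' := Algebra.adjoin ℤ ({ζ} : Set K) with hS'
    have hmin : cyclotomic m ℤ = minpoly ℤ ζ := cyclotomic_eq_minpoly hζ hmpos
    have hroot : eval₂ (Int.castRingHom F) ((g : F)) (minpoly ℤ ζ) = 0 := by
      rw [← hmin, eval₂_eq_eval_map, map_cyclotomic]
      exact hgprim.isRoot_cyclotomic hmpos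
    set ν : S' →+* F := (AdjoinRoot.lift (Int.castRingHom F) ((g : F)) hroot).comp
      ((minpoly.equivAdjoin hζint).symm : S' ≃ₐ[ℤ] AdjoinRoot (minpoly ℤ ζ)).toAlgHom.toRingHom
      with hν
    have hζS : ζ ∈ S' := Algebra.self_mem_adjoin_singleton ℤ ζ
    have hνζ : ν ⟨ζ, hζS⟩ = (g : F) := by
      have h1 : (minpoly.equivAdjoin hζint) (AdjoinRoot.root (minpoly ℤ ζ)) = ⟨ζ, hζS⟩ := by
        rw [← AdjoinRoot.mk_X]
        exact Subtype.ext (by rw [minpoly.coe_equivAdjoin]; exact AdjoinRoot.Minpoly.coe_toAdjoin_mk_X)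
      have h2 : ((minpoly.equivAdjoin hζint).symm) ⟨ζ, hζS⟩ = AdjoinRoot.root (minpoly ℤ ζ) := by
        rw [← h1, AlgEquiv.symm_apply_apply]
      rw [hν]
      simp only [RingHom.comp_apply, AlgEquiv.toAlgHom_eq_coe, AlgHom.toRingHom_eq_coe,
        RingHom.coe_coe, AlgHom.coe_coe, AlgEquiv.coe_algHom]
      rw [h2, AdjoinRoot.lift_root]
    -- all Galois conjugates of E lie in ℤ[ζ]
    have hconjmem : ∀ σ : K ≃ₐ[ℚ] K, σ E ∈ S' := by
      intro σ
      have hwpow : (σ ζ) ^ (m : ℕ) = 1 := by rw [← map_pow, hζ.pow_eq_one, map_one]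
      obtain ⟨i, -, hi⟩ := hζ.eq_pow_of_pow_eq_one hwpow
      have hwS : σ ζ ∈ S' := by rw [← hi]; exact pow_mem hζS i
      have hEexp : σ E = ((σ ζ)^e₁ + (σ ζ)^f₁)^2 + ((σ ζ)^e₂ + (σ ζ)^f₂)^2
          + ((σ ζ)^e₃ + (σ ζ)^f₃)^2
          - ((σ ζ)^e₁ + (σ ζ)^f₁) * ((σ ζ)^e₂ + (σ ζ)^f₂) * ((σ ζ)^e₃ + (σ ζ)^f₃) := by
        rw [hE, hz₁, hz₂, hz₃]
        simp only [map_add, map_sub, map_mul, map_pow]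
      rw [hEexp]
      exact sub_mem
        (add_mem (add_mem (pow_mem (add_mem (pow_mem hwS e₁) (pow_mem hwS f₁)) 2)
          (pow_mem (add_mem (pow_mem hwS e₂) (pow_mem hwS f₂)) 2))
          (pow_mem (add_mem (pow_mem hwS e₃) (pow_mem hwS f₃)) 2))
        (mul_mem (mul_mem (add_mem (pow_mem hwS e₁) (pow_mem hwS f₁))
          (add_mem (pow_mem hwS e₂) (pow_mem hwS f₂)))
          (add_mem (pow_mem hwS e₃) (pow_mem hwS f₃)))
    set cS : (K ≃ₐ[ℚ] K) → S' := fun σ => ⟨σ E, hconjmem σ⟩ with hcS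
    have hprod : algebraMap ℚ K N = ∏ σ : K ≃ₐ[ℚ] K, σ E :=
      Algebra.norm_eq_prod_automorphisms ℚ E
    have hnzS : ((nz : ℤ) : S') = ∏ σ : K ≃ₐ[ℚ] K, cS σ := by
      apply Subtype.coe_injective
      have hA : (((nz : S') : K)) = ((nz : ℤ) : K) := map_intCast (S'.val) nz
      have hB : ((∏ σ : K ≃ₐ[ℚ] K, cS σ : S') : K) = ∏ σ : K ≃ₐ[ℚ] K, ((cS σ : S') : K) :=
        map_prod (S'.val) _ _
      show (((nz : S') : K)) = ((∏ σ : K ≃ₐ[ℚ] K, cS σ : S') : K)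
      rw [hA, hB]
      have hC : ∀ σ : K ≃ₐ[ℚ] K, ((cS σ : S') : K) = σ E := fun _ => rfl
      simp only [hC]
      rw [← hprod, ← hnz, eq_intCast (algebraMap ℤ ℚ) nz, map_intCast]
    have hν1 : ν (cS 1) = 0 := by
      set t : S' := (⟨ζ, hζS⟩ : S') with ht
      have hcs1 : cS 1 = (t^e₁ + t^f₁)^2 + (t^e₂ + t^f₂)^2 + (t^e₃ + t^f₃)^2
          - (t^e₁ + t^f₁) * (t^e₂ + t^f₂) * (t^e₃ + t^f₃) := by
        apply Subtype.ext
        have h1 : ((cS 1 : S') : K) = E := by rw [hcS]; simp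
        have h2 : (((t^e₁ + t^f₁)^2 + (t^e₂ + t^f₂)^2 + (t^e₃ + t^f₃)^2
            - (t^e₁ + t^f₁) * (t^e₂ + t^f₂) * (t^e₃ + t^f₃) : S') : K) = E := by
          push_cast [ht]
          rw [hE, hz₁, hz₂, hz₃]
        show ((cS 1 : S') : K) = _
        rw [h1, h2]
      rw [hcs1]
      simp only [RingHom.map_add, RingHom.map_sub, RingHom.map_mul, RingHom.map_pow, hνζ]
      have hge : ∀ (e : ℕ) (u : Fˣ), g ^ e = u → ((g : F)) ^ e = (u : F) := by
        intro e u h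
        rw [← h]
        exact (Units.val_pow_eq_pow_val g e).symm
      rw [hge e₁ u₁ he₁, hge e₂ u₂ he₂, hge e₃ u₃ he₃,
        hge f₁ u₁⁻¹ hf₁, hge f₂ u₂⁻¹ hf₂, hge f₃ u₃⁻¹ hf₃]
      have hv₁ : (u₁ : F) = lam₁ := rfl
      have hv₂ : (u₂ : F) = lam₂ := rfl
      have hv₃ : (u₃ : F) = lam₃ := rfl
      have hw₁ : ((u₁⁻¹ : Fˣ) : F) = lam₁⁻¹ := by rw [Units.val_inv_eq_inv_val]; rfl
      have hw₂ : ((u₂⁻¹ : Fˣ) : F) = lam₂⁻¹ := by rw [Units.val_inv_eq_inv_val]; rfl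
      have hw₃ : ((u₃⁻¹ : Fˣ) : F) = lam₃⁻¹ := by rw [Units.val_inv_eq_inv_val]; rfl
      rw [hv₁, hv₂, hv₃, hw₁, hw₂, hw₃, hlam₁, hlam₂, hlam₃]
      have hmaps : (algebraMap (ZMod p) F (3*ξ₁))^2 + (algebraMap (ZMod p) F (3*ξ₂))^2
          + (algebraMap (ZMod p) F (3*ξ₃))^2
          - (algebraMap (ZMod p) F (3*ξ₁)) * (algebraMap (ZMod p) F (3*ξ₂))
            * (algebraMap (ZMod p) F (3*ξ₃))
          = algebraMap (ZMod p) F ((3*ξ₁)^2 + (3*ξ₂)^2 + (3*ξ₃)^2 - (3*ξ₁)*(3*ξ₂)*(3*ξ₃)) := by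
        simp only [map_add, map_sub, map_mul, map_pow]
      rw [hmaps]
      have hzero : (3*ξ₁)^2 + (3*ξ₂)^2 + (3*ξ₃)^2 - (3*ξ₁)*(3*ξ₂)*(3*ξ₃) = 0 := by
        linear_combination (9 : ZMod p) * hsurf
      rw [hzero, map_zero]
    have hnzF : ((nz : ℤ) : F) = 0 := by
      have hh := congrArg ν hnzS
      rw [map_intCast, map_prod] at hh
      rw [hh]
      exact Finset.prod_eq_zero (Finset.mem_univ 1) hν1
    have hzmod : ((nz : ℤ) : ZMod p) = 0 := by
      apply (algebraMap (ZMod p) F).injective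
      rw [map_intCast, map_zero]
      exact hnzF
    exact (ZMod.intCast_zmod_eq_zero_iff_dvd nz p).mp hzmod
  -- conclude p ≤ 20 ^ (D^3)
  have hple' : (p : ℝ) ≤ 20 ^ (D ^ 3) := by
    have h1 : (p : ℤ) ≤ |nz| := Int.le_of_dvd (abs_pos.mpr (by
      intro h0
      rw [h0] at hnz
      simp at hnz
      exact hNne hnz.symm)) ((dvd_abs _ _).mpr hdvd)
    have h2 : ((|nz| : ℤ) : ℝ) ≤ 20 ^ m := by
      have h5 : ((|nz| : ℤ) : ℝ) = |(nz : ℝ)| := by push_cast; rfl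
      rw [h5]
      have h3 : (nz : ℝ) = (N : ℝ) := by
        have h4 : (nz : ℚ) = N := by exact_mod_cast hnz
        exact_mod_cast congrArg (fun q : ℚ => (q:ℝ)) h4
      rw [h3]
      exact hNbound
    have h4 : (20:ℝ) ^ m ≤ 20 ^ (D ^ 3) := by
      apply pow_le_pow_right₀ (by norm_num) hmD
    calc (p:ℝ) ≤ ((|nz| : ℤ) : ℝ) := by exact_mod_cast h1
      _ ≤ 20 ^ m := h2
      _ ≤ 20 ^ (D^3) := h4
  -- final real computation
  have hlogp : Real.log p ≤ (D^3 : ℕ) * Real.log 20 := by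
    calc Real.log p ≤ Real.log (20 ^ (D^3)) :=
          Real.log_le_log (by exact_mod_cast hp.out.pos) hple'
      _ = (D^3 : ℕ) * Real.log 20 := Real.log_pow _ _
  have hquot : Real.log p / Real.log 20 ≤ ((D:ℝ))^(3:ℕ) := by
    rw [div_le_iff₀ hlog20]
    calc Real.log p ≤ (D^3 : ℕ) * Real.log 20 := hlogp
      _ = ((D:ℝ))^(3:ℕ) * Real.log 20 := by push_cast; ring
  have hquotnn : 0 ≤ Real.log p / Real.log 20 :=
    div_nonneg (Real.log_natCast_nonneg p) hlog20.le
  calc (Real.log p / Real.log 20) ^ ((1 : ℝ) / 3)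
      ≤ (((D:ℝ))^(3:ℕ)) ^ ((1:ℝ)/3) := Real.rpow_le_rpow hquotnn hquot (by norm_num)
    _ = (D:ℝ) := by
        rw [← Real.rpow_natCast (D:ℝ) 3, ← Real.rpow_mul (by positivity)]
        norm_num
    _ ≤ _ := le_of_eq (by rw [hD]; push_cast; rfl)
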